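/- In the exterior algebra Λ(α₁,...,α₆) on six degree-1 generators, H⁶ of the Chevalley–Eilenberg complex above is 1-dimensional, spanned by [α₁α₂α₃α₄α₅α₆] (every 6-form is closed, and no nonzero multiple of the top form is exact). -/

import Mathlib

set_option linter.unusedSectionVars false
set_option maxHeartbeats 1000000

/-- The generators `α₁,…,α₆` (0-indexed) of the exterior algebra `Λ(α₁,…,α₆)`. -/
noncomputable def genCE (i : Fin 6) : ExteriorAlgebra ℝ (Fin 6 → ℝ) :=
  ExteriorAlgebra.ι ℝ (Pi.single i 1)

namespace CEAux

open ExteriorAlgebra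

abbrev Λ6 := ExteriorAlgebra ℝ (Fin 6 → ℝ)

lemma gsq (i : Fin 6) : genCE i * genCE i = 0 := ExteriorAlgebra.ι_sq_zero _

lemma gsqA (i : Fin 6) (x : Λ6) : genCE i * (genCE i * x) = 0 := by
  rw [← mul_assoc, gsq, zero_mul]

lemma gswap (i j : Fin 6) : genCE j * genCE i = -(genCE i * genCE j) := by
  have h : genCE i * genCE j + genCE j * genCE i = 0 :=
    ExteriorAlgebra.ι_add_mul_swap (Pi.single i 1) (Pi.single j 1)
  exact eq_neg_of_add_eq_zero_right h

lemma gswapA (i j : Fin 6) (x : Λ6) :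
    genCE j * (genCE i * x) = -(genCE i * (genCE j * x)) := by
  rw [← mul_assoc, ← mul_assoc, gswap, neg_mul]

lemma gg_mem (i j : Fin 6) : genCE i * genCE j ∈ ⋀[ℝ]^2 (Fin 6 → ℝ) := by
  show genCE i * genCE j ∈ LinearMap.range (ι ℝ (M := Fin 6 → ℝ)) ^ 2
  rw [pow_two]
  exact Submodule.mul_mem_mul (LinearMap.mem_range_self _ _) (LinearMap.mem_range_self _ _)

/-- The family of alternating forms defining the "top coefficient" functional. -/
noncomputable def fAlt : ∀ i : ℕ, (Fin 6 → ℝ) [⋀^Fin i]→ₗ[ℝ] ℝ :=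
  Function.update (fun _ => 0) 6 (Matrix.detRowAlternating (R := ℝ) (n := Fin 6))

lemma fAlt_six : fAlt 6 = Matrix.detRowAlternating := Function.update_self _ _ _

lemma fAlt_ne {i : ℕ} (h : i ≠ 6) : fAlt i = 0 := Function.update_of_ne h _ _

/-- The "coefficient of the top form" linear functional. -/
noncomputable def φ : Λ6 →ₗ[ℝ] ℝ := liftAlternating fAlt

lemma phi_pow {j : ℕ} (hj : j ≠ 6) {x : Λ6} (hx : x ∈ ⋀[ℝ]^j (Fin 6 → ℝ)) :
    φ x = 0 := by
  rw [← ExteriorAlgebra.ιMulti_span_fixedDegree] at hx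
  induction hx using Submodule.span_induction with
  | mem x h =>
    obtain ⟨v, rfl⟩ := h
    rw [φ, liftAlternating_apply_ιMulti, fAlt_ne hj, AlternatingMap.zero_apply]
  | zero => exact map_zero φ
  | add x y hx hy ihx ihy => rw [map_add, ihx, ihy, add_zero]
  | smul c x hx ihx => rw [map_smul, ihx, smul_zero]

lemma ιMulti_five (v : Fin 5 → (Fin 6 → ℝ)) :
    ExteriorAlgebra.ιMulti ℝ 5 v
      = ι ℝ (v 0) * (ι ℝ (v 1) * (ι ℝ (v 2) * (ι ℝ (v 3) * ι ℝ (v 4)))) := by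
  rw [ExteriorAlgebra.ιMulti_apply]
  simp [List.ofFn_succ, mul_assoc]

lemma ιMulti_six (v : Fin 6 → (Fin 6 → ℝ)) :
    ExteriorAlgebra.ιMulti ℝ 6 v
      = ι ℝ (v 0) * (ι ℝ (v 1) * (ι ℝ (v 2) * (ι ℝ (v 3) * (ι ℝ (v 4) * ι ℝ (v 5))))) := by
  rw [ExteriorAlgebra.ιMulti_apply]
  simp [List.ofFn_succ, mul_assoc]

lemma phi_top :
    φ (genCE 0 * (genCE 1 * (genCE 2 * (genCE 3 * (genCE 4 * genCE 5))))) = 1 := by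
  have h : genCE 0 * (genCE 1 * (genCE 2 * (genCE 3 * (genCE 4 * genCE 5))))
      = ExteriorAlgebra.ιMulti ℝ 6 (fun i => Pi.single i 1) := by
    rw [ιMulti_six]; rfl
  rw [h, φ, liftAlternating_apply_ιMulti, fAlt_six]
  have h1 : (fun i : Fin 6 => (Pi.single i 1 : Fin 6 → ℝ)) = (1 : Matrix (Fin 6) (Fin 6) ℝ) := by
    funext i j
    simp [Matrix.one_apply, Pi.single_apply, eq_comm]
  rw [h1]
  show Matrix.det 1 = 1
  simp [Matrix.det_one]

-- every strictly increasing 5-tuple in `Fin 6` is one of the six obvious ones.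
set_option maxRecDepth 100000 in
set_option synthInstance.maxHeartbeats 2000000 in
set_option synthInstance.maxSize 2048 in
lemma strictMono_fin5 : ∀ a b c d e : Fin 6, a < b → b < c → c < d → d < e →
    (a = 1 ∧ b = 2 ∧ c = 3 ∧ d = 4 ∧ e = 5) ∨
    (a = 0 ∧ b = 2 ∧ c = 3 ∧ d = 4 ∧ e = 5) ∨
    (a = 0 ∧ b = 1 ∧ c = 3 ∧ d = 4 ∧ e = 5) ∨
    (a = 0 ∧ b = 1 ∧ c = 2 ∧ d = 4 ∧ e = 5) ∨
    (a = 0 ∧ b = 1 ∧ c = 2 ∧ d = 3 ∧ e = 5) ∨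
    (a = 0 ∧ b = 1 ∧ c = 2 ∧ d = 3 ∧ e = 4) := by decide

section

variable (d : ExteriorAlgebra ℝ (Fin 6 → ℝ) →ₗ[ℝ] ExteriorAlgebra ℝ (Fin 6 → ℝ))

lemma dg (hleib : ∀ (v : Fin 6 → ℝ) (y : ExteriorAlgebra ℝ (Fin 6 → ℝ)),
      d (ExteriorAlgebra.ι ℝ v * y)
        = d (ExteriorAlgebra.ι ℝ v) * y - ExteriorAlgebra.ι ℝ v * d y)
    (i : Fin 6) (y : ExteriorAlgebra ℝ (Fin 6 → ℝ)) :
    d (genCE i * y) = d (genCE i) * y - genCE i * d y := hleib (Pi.single i 1) y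

variable
    (hone : d 1 = 0)
    (hleib : ∀ (v : Fin 6 → ℝ) (y : ExteriorAlgebra ℝ (Fin 6 → ℝ)),
      d (ExteriorAlgebra.ι ℝ v * y)
        = d (ExteriorAlgebra.ι ℝ v) * y - ExteriorAlgebra.ι ℝ v * d y)
    (h1 : d (genCE 0) = 0) (h2 : d (genCE 1) = 0) (h3 : d (genCE 2) = 0)
    (h4 : d (genCE 3) = genCE 0 * genCE 1)
    (h5 : d (genCE 4) = genCE 0 * genCE 3)
    (h6 : d (genCE 5) = genCE 0 * genCE 4 + genCE 1 * genCE 2 + genCE 1 * genCE 3)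

include hleib h1 h2 h3 h4 h5 h6

lemma dB : d (genCE 1 * (genCE 2 * (genCE 3 * (genCE 4 * genCE 5)))) = 0 := by
  simp only [dg d hleib, h1, h2, h3, h4, h5, h6]
  simp only [mul_add, add_mul, mul_sub, sub_mul, mul_neg, neg_mul, mul_zero, zero_mul,
    zero_sub, sub_zero, neg_neg, neg_zero, mul_one, one_mul, mul_assoc,
    gsq, gsqA,
    gswap 0 1, gswap 0 2, gswap 0 3, gswap 0 4, gswap 0 5,
    gswap 1 2, gswap 1 3, gswap 1 4, gswap 1 5,
    gswap 2 3, gswap 2 4, gswap 2 5, gswap 3 4, gswap 3 5, gswap 4 5,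
    gswapA 0 1, gswapA 0 2, gswapA 0 3, gswapA 0 4, gswapA 0 5,
    gswapA 1 2, gswapA 1 3, gswapA 1 4, gswapA 1 5,
    gswapA 2 3, gswapA 2 4, gswapA 2 5, gswapA 3 4, gswapA 3 5, gswapA 4 5]
  all_goals abel

lemma dC : d (genCE 0 * (genCE 2 * (genCE 3 * (genCE 4 * genCE 5)))) = 0 := by
  simp only [dg d hleib, h1, h2, h3, h4, h5, h6]
  simp only [mul_add, add_mul, mul_sub, sub_mul, mul_neg, neg_mul, mul_zero, zero_mul,
    zero_sub, sub_zero, neg_neg, neg_zero, mul_one, one_mul, mul_assoc,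
    gsq, gsqA,
    gswap 0 1, gswap 0 2, gswap 0 3, gswap 0 4, gswap 0 5,
    gswap 1 2, gswap 1 3, gswap 1 4, gswap 1 5,
    gswap 2 3, gswap 2 4, gswap 2 5, gswap 3 4, gswap 3 5, gswap 4 5,
    gswapA 0 1, gswapA 0 2, gswapA 0 3, gswapA 0 4, gswapA 0 5,
    gswapA 1 2, gswapA 1 3, gswapA 1 4, gswapA 1 5,
    gswapA 2 3, gswapA 2 4, gswapA 2 5, gswapA 3 4, gswapA 3 5, gswapA 4 5]
  all_goals abel

lemma dD : d (genCE 0 * (genCE 1 * (genCE 3 * (genCE 4 * genCE 5)))) = 0 := by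
  simp only [dg d hleib, h1, h2, h3, h4, h5, h6]
  simp only [mul_add, add_mul, mul_sub, sub_mul, mul_neg, neg_mul, mul_zero, zero_mul,
    zero_sub, sub_zero, neg_neg, neg_zero, mul_one, one_mul, mul_assoc,
    gsq, gsqA,
    gswap 0 1, gswap 0 2, gswap 0 3, gswap 0 4, gswap 0 5,
    gswap 1 2, gswap 1 3, gswap 1 4, gswap 1 5,
    gswap 2 3, gswap 2 4, gswap 2 5, gswap 3 4, gswap 3 5, gswap 4 5,
    gswapA 0 1, gswapA 0 2, gswapA 0 3, gswapA 0 4, gswapA 0 5,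
    gswapA 1 2, gswapA 1 3, gswapA 1 4, gswapA 1 5,
    gswapA 2 3, gswapA 2 4, gswapA 2 5, gswapA 3 4, gswapA 3 5, gswapA 4 5]
  all_goals abel

lemma dE : d (genCE 0 * (genCE 1 * (genCE 2 * (genCE 4 * genCE 5)))) = 0 := by
  simp only [dg d hleib, h1, h2, h3, h4, h5, h6]
  simp only [mul_add, add_mul, mul_sub, sub_mul, mul_neg, neg_mul, mul_zero, zero_mul,
    zero_sub, sub_zero, neg_neg, neg_zero, mul_one, one_mul, mul_assoc,
    gsq, gsqA,
    gswap 0 1, gswap 0 2, gswap 0 3, gswap 0 4, gswap 0 5,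
    gswap 1 2, gswap 1 3, gswap 1 4, gswap 1 5,
    gswap 2 3, gswap 2 4, gswap 2 5, gswap 3 4, gswap 3 5, gswap 4 5,
    gswapA 0 1, gswapA 0 2, gswapA 0 3, gswapA 0 4, gswapA 0 5,
    gswapA 1 2, gswapA 1 3, gswapA 1 4, gswapA 1 5,
    gswapA 2 3, gswapA 2 4, gswapA 2 5, gswapA 3 4, gswapA 3 5, gswapA 4 5]
  all_goals abel

lemma dF : d (genCE 0 * (genCE 1 * (genCE 2 * (genCE 3 * genCE 5)))) = 0 := by
  simp only [dg d hleib, h1, h2, h3, h4, h5, h6]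
  simp only [mul_add, add_mul, mul_sub, sub_mul, mul_neg, neg_mul, mul_zero, zero_mul,
    zero_sub, sub_zero, neg_neg, neg_zero, mul_one, one_mul, mul_assoc,
    gsq, gsqA,
    gswap 0 1, gswap 0 2, gswap 0 3, gswap 0 4, gswap 0 5,
    gswap 1 2, gswap 1 3, gswap 1 4, gswap 1 5,
    gswap 2 3, gswap 2 4, gswap 2 5, gswap 3 4, gswap 3 5, gswap 4 5,
    gswapA 0 1, gswapA 0 2, gswapA 0 3, gswapA 0 4, gswapA 0 5,
    gswapA 1 2, gswapA 1 3, gswapA 1 4, gswapA 1 5,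
    gswapA 2 3, gswapA 2 4, gswapA 2 5, gswapA 3 4, gswapA 3 5, gswapA 4 5]
  all_goals abel

lemma dG : d (genCE 0 * (genCE 1 * (genCE 2 * (genCE 3 * genCE 4)))) = 0 := by
  simp only [dg d hleib, h1, h2, h3, h4, h5, h6]
  simp only [mul_add, add_mul, mul_sub, sub_mul, mul_neg, neg_mul, mul_zero, zero_mul,
    zero_sub, sub_zero, neg_neg, neg_zero, mul_one, one_mul, mul_assoc,
    gsq, gsqA,
    gswap 0 1, gswap 0 2, gswap 0 3, gswap 0 4, gswap 0 5,
    gswap 1 2, gswap 1 3, gswap 1 4, gswap 1 5,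
    gswap 2 3, gswap 2 4, gswap 2 5, gswap 3 4, gswap 3 5, gswap 4 5,
    gswapA 0 1, gswapA 0 2, gswapA 0 3, gswapA 0 4, gswapA 0 5,
    gswapA 1 2, gswapA 1 3, gswapA 1 4, gswapA 1 5,
    gswapA 2 3, gswapA 2 4, gswapA 2 5, gswapA 3 4, gswapA 3 5, gswapA 4 5]
  all_goals abel

lemma dTop : d (genCE 0 * (genCE 1 * (genCE 2 * (genCE 3 * (genCE 4 * genCE 5))))) = 0 := by
  rw [dg d hleib, h1, dB d hleib h1 h2 h3 h4 h5 h6]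
  simp

/-- `d` kills every element of `Λ⁵`. -/
lemma d_five {x : Λ6} (hx : x ∈ ⋀[ℝ]^5 (Fin 6 → ℝ)) : d x = 0 := by
  classical
  have hzero : d.compAlternatingMap (ExteriorAlgebra.ιMulti ℝ 5) = 0 := by
    apply Module.Basis.ext_alternating (Pi.basisFun ℝ (Fin 6))
    intro v hv
    rw [AlternatingMap.zero_apply]
    set s : Finset (Fin 6) := Finset.image v Finset.univ with hs
    have hcard : s.card = 5 := by
      rw [hs, Finset.card_image_of_injective _ hv, Finset.card_fin]
    have hmem : ∀ i, v i ∈ s := fun i => by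
      rw [hs]; exact Finset.mem_image_of_mem v (Finset.mem_univ i)
    set w : Fin 5 → Fin 6 := fun i => s.orderEmbOfFin hcard i with hwdef
    have hwmono : StrictMono w := (s.orderEmbOfFin hcard).strictMono
    set σ0 : Fin 5 → Fin 5 := fun i => (s.orderIsoOfFin hcard).symm ⟨v i, hmem i⟩ with hσ0
    have hwσ : ∀ i, w (σ0 i) = v i := by
      intro i
      show (s.orderEmbOfFin hcard) ((s.orderIsoOfFin hcard).symm ⟨v i, hmem i⟩) = v i
      rw [← Finset.coe_orderIsoOfFin_apply, OrderIso.apply_symm_apply]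
    have hσ0inj : Function.Injective σ0 := by
      intro a b hab
      apply hv
      rw [← hwσ a, ← hwσ b, hab]
    set σ : Equiv.Perm (Fin 5) :=
      Equiv.ofBijective σ0 (Finite.injective_iff_bijective.mp hσ0inj) with hσ
    have hvw : (fun i => (Pi.basisFun ℝ (Fin 6)) (v i))
        = (fun i => (Pi.basisFun ℝ (Fin 6)) (w i)) ∘ σ := by
      funext i
      show _ = (Pi.basisFun ℝ (Fin 6)) (w (σ i))
      rw [hσ, Equiv.ofBijective_apply, hwσ]
    have hw0 : (d.compAlternatingMap (ExteriorAlgebra.ιMulti ℝ 5))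
        (fun i => (Pi.basisFun ℝ (Fin 6)) (w i)) = 0 := by
      rw [LinearMap.compAlternatingMap_apply, ιMulti_five]
      simp only [Pi.basisFun_apply]
      rcases strictMono_fin5 (w 0) (w 1) (w 2) (w 3) (w 4)
        (hwmono (by decide)) (hwmono (by decide)) (hwmono (by decide)) (hwmono (by decide)) with
        ⟨e0, e1, e2, e3, e4⟩ | ⟨e0, e1, e2, e3, e4⟩ | ⟨e0, e1, e2, e3, e4⟩ |
        ⟨e0, e1, e2, e3, e4⟩ | ⟨e0, e1, e2, e3, e4⟩ | ⟨e0, e1, e2, e3, e4⟩ <;>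
        rw [e0, e1, e2, e3, e4]
      · exact dB d hleib h1 h2 h3 h4 h5 h6
      · exact dC d hleib h1 h2 h3 h4 h5 h6
      · exact dD d hleib h1 h2 h3 h4 h5 h6
      · exact dE d hleib h1 h2 h3 h4 h5 h6
      · exact dF d hleib h1 h2 h3 h4 h5 h6
      · exact dG d hleib h1 h2 h3 h4 h5 h6
    rw [hvw, AlternatingMap.map_perm, hw0, smul_zero]
  rw [← ExteriorAlgebra.ιMulti_span_fixedDegree] at hx
  induction hx using Submodule.span_induction with
  | mem x h =>
    obtain ⟨v, rfl⟩ := h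
    have := DFunLike.congr_fun hzero v
    rwa [LinearMap.compAlternatingMap_apply, AlternatingMap.zero_apply] at this
  | zero => exact map_zero d
  | add x y hx hy ihx ihy => rw [map_add, ihx, ihy, add_zero]
  | smul c x hx ihx => rw [map_smul, ihx, smul_zero]

include hone

lemma d_iota_mem (v : Fin 6 → ℝ) : d (ExteriorAlgebra.ι ℝ v) ∈ ⋀[ℝ]^2 (Fin 6 → ℝ) := by
  have hv0 : v = ∑ i : Fin 6, v i • (Pi.single i 1 : Fin 6 → ℝ) := by
    funext j
    rw [Finset.sum_apply]
    simp [Pi.single_apply]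
  have hv : (ExteriorAlgebra.ι ℝ v : Λ6) = ∑ i : Fin 6, v i • genCE i := by
    conv_lhs => rw [hv0]
    rw [map_sum]
    simp only [map_smul]
    rfl
  rw [hv, map_sum]
  refine Submodule.sum_mem _ (fun i _ => ?_)
  rw [map_smul]
  refine Submodule.smul_mem _ _ ?_
  fin_cases i
  · show d (genCE 0) ∈ _; rw [h1]; exact Submodule.zero_mem _
  · show d (genCE 1) ∈ _; rw [h2]; exact Submodule.zero_mem _
  · show d (genCE 2) ∈ _; rw [h3]; exact Submodule.zero_mem _
  · show d (genCE 3) ∈ _; rw [h4]; exact gg_mem 0 1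
  · show d (genCE 4) ∈ _; rw [h5]; exact gg_mem 0 3
  · show d (genCE 5) ∈ _
    rw [h6]
    exact Submodule.add_mem _ (Submodule.add_mem _ (gg_mem 0 4) (gg_mem 1 2)) (gg_mem 1 3)

lemma d_pow {k : ℕ} {x : Λ6} (hx : x ∈ ⋀[ℝ]^k (Fin 6 → ℝ)) :
    d x ∈ ⋀[ℝ]^(k + 1) (Fin 6 → ℝ) := by
  induction hx using Submodule.pow_induction_on_left' with
  | algebraMap r =>
    rw [Algebra.algebraMap_eq_smul_one, map_smul, hone, smul_zero]
    exact Submodule.zero_mem _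
  | add x y i hx hy ihx ihy => rw [map_add]; exact Submodule.add_mem _ ihx ihy
  | mem_mul m hm i x hx ih =>
    obtain ⟨v, rfl⟩ := hm
    rw [hleib]
    refine Submodule.sub_mem _ ?_ ?_
    · have hmm := Submodule.mul_mem_mul (d_iota_mem d hone hleib h1 h2 h3 h4 h5 h6 v) hx
      rwa [show LinearMap.range (ι ℝ (M := Fin 6 → ℝ)) ^ 2 * LinearMap.range (ι ℝ) ^ i
          = LinearMap.range (ι ℝ (M := Fin 6 → ℝ)) ^ (i + 1 + 1) by
        rw [← pow_add]; ring_nf] at hmm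
    · have hmm := Submodule.mul_mem_mul (LinearMap.mem_range_self (ι ℝ) v) ih
      rwa [show LinearMap.range (ι ℝ (M := Fin 6 → ℝ)) * LinearMap.range (ι ℝ) ^ (i + 1)
          = LinearMap.range (ι ℝ (M := Fin 6 → ℝ)) ^ (i + 1 + 1) by
        rw [← pow_succ']] at hmm

lemma phi_d (β : Λ6) : φ (d β) = 0 := by
  induction β using DirectSum.Decomposition.inductionOn (fun i : ℕ => ⋀[ℝ]^i (Fin 6 → ℝ)) with
  | zero => rw [map_zero, map_zero]
  | add x y hx hy => rw [map_add, map_add, hx, hy, add_zero]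
  | homogeneous m =>
    rename_i i
    obtain ⟨x, hx⟩ := m
    by_cases hi : i = 5
    · subst hi
      rw [d_five d hleib h1 h2 h3 h4 h5 h6 hx, map_zero]
    · exact phi_pow (by omega) (d_pow d hone hleib h1 h2 h3 h4 h5 h6 hx)

end

end CEAux

/-- `H⁶` of the Chevalley–Eilenberg complex is 1-dimensional, spanned by the
class of the top form `α₁α₂α₃α₄α₅α₆`: the top form is nonzero and closed,
`d` of each basis 5-form vanishes, and no nonzero multiple of the top form
is exact. -/
theorem H6_one_dimensional
    (d : ExteriorAlgebra ℝ (Fin 6 → ℝ) →ₗ[ℝ] ExteriorAlgebra ℝ (Fin 6 → ℝ))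
    (hone : d 1 = 0)
    (hleib : ∀ (v : Fin 6 → ℝ) (y : ExteriorAlgebra ℝ (Fin 6 → ℝ)),
      d (ExteriorAlgebra.ι ℝ v * y)
        = d (ExteriorAlgebra.ι ℝ v) * y - ExteriorAlgebra.ι ℝ v * d y)
    (h1 : d (genCE 0) = 0) (h2 : d (genCE 1) = 0) (h3 : d (genCE 2) = 0)
    (h4 : d (genCE 3) = genCE 0 * genCE 1)
    (h5 : d (genCE 4) = genCE 0 * genCE 3)
    (h6 : d (genCE 5) = genCE 0 * genCE 4 + genCE 1 * genCE 2 + genCE 1 * genCE 3) :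
    genCE 0 * genCE 1 * genCE 2 * genCE 3 * genCE 4 * genCE 5 ≠ 0 ∧
    d (genCE 0 * genCE 1 * genCE 2 * genCE 3 * genCE 4 * genCE 5) = 0 ∧
    d (genCE 1 * genCE 2 * genCE 3 * genCE 4 * genCE 5) = 0 ∧
    d (genCE 0 * genCE 2 * genCE 3 * genCE 4 * genCE 5) = 0 ∧
    d (genCE 0 * genCE 1 * genCE 3 * genCE 4 * genCE 5) = 0 ∧
    d (genCE 0 * genCE 1 * genCE 2 * genCE 4 * genCE 5) = 0 ∧
    d (genCE 0 * genCE 1 * genCE 2 * genCE 3 * genCE 5) = 0 ∧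
    d (genCE 0 * genCE 1 * genCE 2 * genCE 3 * genCE 4) = 0 ∧
    (∀ c : ℝ, c ≠ 0 →
      ¬ ∃ β, d β = c • (genCE 0 * genCE 1 * genCE 2 * genCE 3 * genCE 4 * genCE 5)) := by
  have htop : genCE 0 * genCE 1 * genCE 2 * genCE 3 * genCE 4 * genCE 5
      = genCE 0 * (genCE 1 * (genCE 2 * (genCE 3 * (genCE 4 * genCE 5)))) := by
    simp only [mul_assoc]
  refine ⟨?_, ?_, ?_, ?_, ?_, ?_, ?_, ?_, ?_⟩
  · intro h
    have := CEAux.phi_top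
    rw [← htop, h, map_zero] at this
    exact zero_ne_one this
  · rw [htop]; exact CEAux.dTop d hleib h1 h2 h3 h4 h5 h6
  · rw [show genCE 1 * genCE 2 * genCE 3 * genCE 4 * genCE 5
      = genCE 1 * (genCE 2 * (genCE 3 * (genCE 4 * genCE 5))) by simp only [mul_assoc]]
    exact CEAux.dB d hleib h1 h2 h3 h4 h5 h6
  · rw [show genCE 0 * genCE 2 * genCE 3 * genCE 4 * genCE 5
      = genCE 0 * (genCE 2 * (genCE 3 * (genCE 4 * genCE 5))) by simp only [mul_assoc]]
    exact CEAux.dC d hleib h1 h2 h3 h4 h5 h6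
  · rw [show genCE 0 * genCE 1 * genCE 3 * genCE 4 * genCE 5
      = genCE 0 * (genCE 1 * (genCE 3 * (genCE 4 * genCE 5))) by simp only [mul_assoc]]
    exact CEAux.dD d hleib h1 h2 h3 h4 h5 h6
  · rw [show genCE 0 * genCE 1 * genCE 2 * genCE 4 * genCE 5
      = genCE 0 * (genCE 1 * (genCE 2 * (genCE 4 * genCE 5))) by simp only [mul_assoc]]
    exact CEAux.dE d hleib h1 h2 h3 h4 h5 h6
  · rw [show genCE 0 * genCE 1 * genCE 2 * genCE 3 * genCE 5
      = genCE 0 * (genCE 1 * (genCE 2 * (genCE 3 * genCE 5))) by simp only [mul_assoc]]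
    exact CEAux.dF d hleib h1 h2 h3 h4 h5 h6
  · rw [show genCE 0 * genCE 1 * genCE 2 * genCE 3 * genCE 4
      = genCE 0 * (genCE 1 * (genCE 2 * (genCE 3 * genCE 4))) by simp only [mul_assoc]]
    exact CEAux.dG d hleib h1 h2 h3 h4 h5 h6
  · rintro c hc ⟨β, hβ⟩
    have hphi := CEAux.phi_d d hone hleib h1 h2 h3 h4 h5 h6 β
    rw [hβ, map_smul, htop, CEAux.phi_top, smul_eq_mul, mul_one] at hphi
    exact hc hphi
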